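/- arXiv:0906.4694 — 2 statements merged into one kernel-verified Lean document; each statement's English description precedes it below -/
import Mathlib

section
/- Define, on the set D_k of pairings (perfect matchings) of {1,...,2k}, the function d(π,σ) = k − loops(π,σ), where loops(π,σ) is the number of loops (connected components) in the union of the two pairings viewed as graphs on {1,...,2k}. Then d is a metric on D_k: d(π,σ) = 0 iff π = σ, d is symmetric, and d satisfies the triangle inequality. -/
/-- A pairing (perfect matching) of a finite set, encoded as a fixed-point-free involution. -/
def IsPairing {N : ℕ} (f : Equiv.Perm (Fin N)) : Prop :=
  (∀ x, f (f x) = x) ∧ (∀ x, f x ≠ x)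

/-- `loops π σ` is the number of loops (connected components) obtained when superposing the
pairings `π` and `σ`, i.e. the number of components of the graph whose edges join `x` to `π x`
and `x` to `σ x`. -/
noncomputable def loops {N : ℕ} (π σ : Equiv.Perm (Fin N)) : ℕ :=
  Nat.card (Quot (fun x y : Fin N => π x = y ∨ σ x = y))
open Finset Relation

namespace BrauerAux

variable {α : Type*}

/-- Number of blocks of a setoid. -/
noncomputable def blocks (s : Setoid α) : ℕ := Nat.card (Quot (⇑s))

lemma blocks_antitone [Finite α] {s t : Setoid α} (h : s ≤ t) : blocks t ≤ blocks s := by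
  refine Nat.card_le_card_of_surjective (Quot.map id fun x y hxy => Setoid.le_def.mp h hxy) ?_
  intro q
  induction q using Quot.ind with
  | _ x => exact ⟨Quot.mk _ x, rfl⟩

/-- The setoid obtained from `u` by merging the classes of `a` and `b`. -/
def merge (u : Setoid α) (a b : α) : Setoid α where
  r x y := u x y ∨ (u x a ∧ u b y) ∨ (u x b ∧ u a y)
  iseqv := by
    constructor
    · exact fun x => Or.inl (u.refl x)
    · intro x y h
      rcases h with h | ⟨h1, h2⟩ | ⟨h1, h2⟩
      · exact Or.inl (u.symm h)
      · exact Or.inr (Or.inr ⟨u.symm h2, u.symm h1⟩)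
      · exact Or.inr (Or.inl ⟨u.symm h2, u.symm h1⟩)
    · intro x y z h1 h2
      rcases h1 with h | ⟨ha, hb⟩ | ⟨ha, hb⟩ <;> rcases h2 with g | ⟨ga, gb⟩ | ⟨ga, gb⟩
      · exact Or.inl (u.trans h g)
      · exact Or.inr (Or.inl ⟨u.trans h ga, gb⟩)
      · exact Or.inr (Or.inr ⟨u.trans h ga, gb⟩)
      · exact Or.inr (Or.inl ⟨ha, u.trans hb g⟩)
      · exact Or.inl (u.trans ha (u.trans (u.symm (u.trans hb ga)) gb))
      · exact Or.inl (u.trans ha gb)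
      · exact Or.inr (Or.inr ⟨ha, u.trans hb g⟩)
      · exact Or.inl (u.trans ha gb)
      · exact Or.inl (u.trans ha (u.trans (u.symm (u.trans hb ga)) gb))

lemma merge_rel {u : Setoid α} {a b x y : α} :
    merge u a b x y ↔ u x y ∨ (u x a ∧ u b y) ∨ (u x b ∧ u a y) := Iff.rfl

lemma le_merge (u : Setoid α) (a b : α) : u ≤ merge u a b :=
  Setoid.le_def.mpr fun h => Or.inl h

lemma merge_rel_ab (u : Setoid α) (a b : α) : merge u a b a b :=
  Or.inr (Or.inl ⟨u.refl a, u.refl b⟩)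

lemma merge_le {u s : Setoid α} {a b : α} (hus : u ≤ s) (hab : s a b) :
    merge u a b ≤ s := by
  refine Setoid.le_def.mpr fun {x y} h => ?_
  rcases h with h | ⟨h1, h2⟩ | ⟨h1, h2⟩
  · exact hus h
  · exact s.trans (hus h1) (s.trans hab (hus h2))
  · exact s.trans (hus h1) (s.trans (s.symm hab) (hus h2))

/-- The setoid identifying `a` with `b` (and nothing else). -/
def pairSetoid (a b : α) : Setoid α := EqvGen.setoid (fun x y => x = a ∧ y = b)

lemma merge_eq_sup (u : Setoid α) (a b : α) : merge u a b = u ⊔ pairSetoid a b := by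
  refine le_antisymm (merge_le le_sup_left ?_) (sup_le (le_merge u a b) ?_)
  · exact Setoid.le_def.mp le_sup_right (EqvGen.rel _ _ ⟨rfl, rfl⟩)
  · refine Setoid.eqvGen_le fun x y hxy => ?_
    obtain ⟨rfl, rfl⟩ := hxy
    exact merge_rel_ab u x y

lemma card_le_card_add_one {A : Type*} {B : Type*} [Finite A] [Finite B] (f : A → B) (a0 : A)
    (h : ∀ x y, f x = f y → x = y ∨ x = a0 ∨ y = a0) : Nat.card A ≤ Nat.card B + 1 := by
  classical
  cases nonempty_fintype A
  cases nonempty_fintype B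
  rw [Nat.card_eq_fintype_card, Nat.card_eq_fintype_card]
  have h1 : ((univ : Finset A).erase a0).card ≤ (univ : Finset B).card := by
    refine Finset.card_le_card_of_injOn f (fun _ _ => mem_univ _) ?_
    intro x hx y hy hxy
    simp only [Finset.coe_erase, Set.mem_diff, Set.mem_singleton_iff] at hx hy
    rcases h x y hxy with h' | h' | h'
    · exact h'
    · exact absurd h' hx.2
    · exact absurd h' hy.2
  have h2 : ((univ : Finset A).erase a0).card = Fintype.card A - 1 := by
    rw [Finset.card_erase_of_mem (mem_univ a0), Finset.card_univ]
  have h3 : 0 < Fintype.card A := Fintype.card_pos_iff.mpr ⟨a0⟩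
  rw [Finset.card_univ] at h1
  omega

lemma quot_merge_exact {u : Setoid α} {a b x y : α}
    (h : Quot.mk ⇑(merge u a b) x = Quot.mk ⇑(merge u a b) y) : merge u a b x y :=
  ((merge u a b).iseqv.eqvGen_iff).mp (Quot.eq.mp h)

lemma blocks_le_blocks_merge_add_one [Finite α] (u : Setoid α) (a b : α) :
    blocks u ≤ blocks (merge u a b) + 1 := by
  refine card_le_card_add_one
    (Quot.map id fun x y h => Setoid.le_def.mp (le_merge u a b) h) (Quot.mk _ a) ?_
  intro x y
  induction x using Quot.ind with | _ x => ?_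
  induction y using Quot.ind with | _ y => ?_
  intro hxy
  have hm : merge u a b x y := quot_merge_exact hxy
  rcases hm with h | ⟨h1, h2⟩ | ⟨h1, h2⟩
  · exact Or.inl (Quot.sound h)
  · exact Or.inr (Or.inl (Quot.sound h1))
  · exact Or.inr (Or.inr ((Quot.sound h2).symm))

lemma blocks_merge_lt [Finite α] {u : Setoid α} {a b : α} (hab : ¬ u a b) :
    blocks (merge u a b) < blocks u := by
  classical
  have := Fintype.ofFinite (Quot ⇑u)
  have := Fintype.ofFinite (Quot ⇑(merge u a b))
  rw [blocks, blocks, Nat.card_eq_fintype_card, Nat.card_eq_fintype_card]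
  refine Fintype.card_lt_of_surjective_not_injective
    (Quot.map id fun x y h => Setoid.le_def.mp (le_merge u a b) h) ?_ ?_
  · intro q
    induction q using Quot.ind with
    | _ x => exact ⟨Quot.mk _ x, rfl⟩
  · intro hinj
    have h1 : (Quot.map id fun x y h => Setoid.le_def.mp (le_merge u a b) h) (Quot.mk ⇑u a)
        = (Quot.map id fun x y h => Setoid.le_def.mp (le_merge u a b) h) (Quot.mk ⇑u b) :=
      Quot.sound (merge_rel_ab u a b)
    have h2 := hinj h1
    exact hab (u.iseqv.eqvGen_iff.mp (Quot.eq.mp h2))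

end BrauerAux
section Part2
open Finset Relation BrauerAux
variable {α : Type*}
namespace BrauerAux

/-- Merge a list of pairs into a setoid. -/
def mergeList (l : List (α × α)) (u : Setoid α) : Setoid α :=
  l.foldr (fun p w => merge w p.1 p.2) u

@[simp] lemma mergeList_nil (u : Setoid α) : mergeList [] u = u := rfl

@[simp] lemma mergeList_cons (p : α × α) (l : List (α × α)) (u : Setoid α) :
    mergeList (p :: l) u = merge (mergeList l u) p.1 p.2 := rfl

lemma blocks_le_mergeList [Finite α] (l : List (α × α)) (u : Setoid α) :
    blocks u ≤ blocks (mergeList l u) + l.length := by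
  induction l with
  | nil => simp
  | cons p l ih =>
    have := blocks_le_blocks_merge_add_one (mergeList l u) p.1 p.2
    simp only [mergeList_cons, List.length_cons]
    omega

lemma mergeList_sup (l : List (α × α)) (u t : Setoid α) :
    mergeList l u ⊔ t = mergeList l (u ⊔ t) := by
  induction l with
  | nil => simp
  | cons p l ih =>
    simp only [mergeList_cons, merge_eq_sup]
    rw [sup_right_comm, ih]

lemma exists_mergeList [Finite α] :
    ∀ n (u s : Setoid α), blocks u ≤ n → u ≤ s →
      ∃ l : List (α × α), mergeList l u = s ∧ blocks s + l.length ≤ blocks u := by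
  intro n
  induction n with
  | zero =>
    intro u s hn hus
    have h0 : blocks u = 0 := Nat.le_zero.mp hn
    have hemp : IsEmpty (Quot ⇑u) := by
      rcases Nat.card_eq_zero.mp h0 with h | h
      · exact h
      · exact absurd h (not_infinite_iff_finite.mpr inferInstance)
    have hα : IsEmpty α := ⟨fun x => hemp.elim (Quot.mk _ x)⟩
    have : u = s := Setoid.ext fun x => hα.elim x
    exact ⟨[], by simp [this], by simp [this]⟩
  | succ n ih =>
    intro u s hn hus
    by_cases h : u = s
    · exact ⟨[], by simp [h], by simp [h]⟩
    · have hex : ∃ a b, s a b ∧ ¬ u a b := by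
        by_contra hc
        push_neg at hc
        exact h (le_antisymm hus (Setoid.le_def.mpr fun {x y} hxy => hc x y hxy))
      obtain ⟨a, b, hs, hu⟩ := hex
      have hlt := blocks_merge_lt (u := u) hu
      obtain ⟨l, hl1, hl2⟩ := ih (merge u a b) s (by omega) (merge_le hus hs)
      refine ⟨l ++ [(a, b)], ?_, ?_⟩
      · rw [mergeList, List.foldr_append]
        exact hl1
      · simp only [List.length_append, List.length_cons, List.length_nil]
        omega

lemma blocks_submodular [Finite α] {u s t : Setoid α} (hus : u ≤ s) (hut : u ≤ t) :
    blocks s + blocks t ≤ blocks u + blocks (s ⊔ t) := by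
  obtain ⟨l, hl, hcount⟩ := exists_mergeList (blocks u) u s le_rfl hus
  have h1 : s ⊔ t = mergeList l t := by
    rw [← hl, mergeList_sup, sup_eq_right.mpr hut]
  have h2 : blocks t ≤ blocks (s ⊔ t) + l.length := by
    rw [h1]; exact blocks_le_mergeList l t
  omega

end BrauerAux
end Part2
section Part3
open Finset Relation BrauerAux
namespace BrauerAux

/-- The superposition relation of two pairings. -/
abbrev pr {N : ℕ} (π σ : Equiv.Perm (Fin N)) : Fin N → Fin N → Prop :=
  fun x y => π x = y ∨ σ x = y

/-- `Quot r` is equivalent to the quotient by the equivalence closure of `r`. -/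
def quotEqvGen {α : Type*} (r : α → α → Prop) : Quot r ≃ Quot (EqvGen r) where
  toFun := Quot.map id fun a b h => EqvGen.rel a b h
  invFun := Quot.lift (Quot.mk r) fun a b h => Quot.eqvGen_sound h
  left_inv q := by induction q using Quot.ind with | _ x => rfl
  right_inv q := by induction q using Quot.ind with | _ x => rfl

lemma loops_eq_blocks {N : ℕ} (π σ : Equiv.Perm (Fin N)) :
    loops π σ = blocks (EqvGen.setoid (pr π σ)) :=
  Nat.card_congr (quotEqvGen (pr π σ))

lemma loops_comm {N : ℕ} (π σ : Equiv.Perm (Fin N)) : loops π σ = loops σ π :=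
  Nat.card_congr (Quot.congrRight fun _ _ => or_comm)

lemma pair_subset_fiber {N : ℕ} (π σ : Equiv.Perm (Fin N)) (x0 : Fin N) [DecidableEq (Quot (pr π σ))] :
    ({x0, π x0} : Finset (Fin N)) ⊆
      univ.filter fun y => Quot.mk (pr π σ) y = Quot.mk (pr π σ) x0 := by
  intro y hy
  rcases Finset.mem_insert.mp hy with rfl | hy
  · exact mem_filter.mpr ⟨mem_univ _, rfl⟩
  · rw [Finset.mem_singleton] at hy
    subst hy
    have hrel : pr π σ x0 (π x0) := Or.inl rfl
    exact mem_filter.mpr ⟨mem_univ _, (Quot.sound hrel).symm⟩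

lemma two_mul_loops_le {N : ℕ} {π : Equiv.Perm (Fin N)} (σ : Equiv.Perm (Fin N))
    (hπ : IsPairing π) : 2 * loops π σ ≤ N := by
  classical
  have : Fintype (Quot (pr π σ)) := Fintype.ofFinite _
  have hsum : (univ : Finset (Fin N)).card
      = ∑ c : Quot (pr π σ), (univ.filter fun x => Quot.mk (pr π σ) x = c).card :=
    Finset.card_eq_sum_card_fiberwise fun x _ => mem_univ _
  have hlow : ∀ c : Quot (pr π σ), 2 ≤ (univ.filter fun x => Quot.mk (pr π σ) x = c).card := by
    intro c
    obtain ⟨x0, rfl⟩ := Quot.exists_rep c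
    calc 2 = ({x0, π x0} : Finset (Fin N)).card := (Finset.card_pair (Ne.symm (hπ.2 x0))).symm
    _ ≤ _ := Finset.card_le_card (pair_subset_fiber π σ x0)
  have h2 : ∑ c : Quot (pr π σ), 2
      ≤ ∑ c : Quot (pr π σ), (univ.filter fun x => Quot.mk (pr π σ) x = c).card :=
    Finset.sum_le_sum fun c _ => hlow c
  have hN : (univ : Finset (Fin N)).card = N := by simp
  have hQ : ∑ c : Quot (pr π σ), 2 = 2 * loops π σ := by
    rw [Finset.sum_const, Finset.card_univ, smul_eq_mul, mul_comm]
    congr 1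
    rw [loops, Nat.card_eq_fintype_card]
  omega

lemma eqvGen_self {N : ℕ} {π : Equiv.Perm (Fin N)} (hπ : IsPairing π) {x y : Fin N} :
    EqvGen (pr π π) x y ↔ y = x ∨ y = π x := by
  constructor
  · intro h
    induction h with
    | rel a b hab => exact Or.inr (by rcases hab with h | h <;> exact h.symm)
    | refl a => exact Or.inl rfl
    | symm a b _ ih =>
      rcases ih with rfl | rfl
      · exact Or.inl rfl
      · exact Or.inr ((hπ.1 a).symm)
    | trans a b c _ _ ih1 ih2 =>
      rcases ih1 with rfl | rfl
      · exact ih2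
      · rcases ih2 with rfl | rfl
        · exact Or.inr rfl
        · exact Or.inl (hπ.1 a)
  · rintro (rfl | rfl)
    · exact EqvGen.refl _
    · exact EqvGen.rel _ _ (Or.inl rfl)

lemma two_mul_loops_self {N : ℕ} {π : Equiv.Perm (Fin N)} (hπ : IsPairing π) :
    2 * loops π π = N := by
  classical
  have : Fintype (Quot (pr π π)) := Fintype.ofFinite _
  have hsum : (univ : Finset (Fin N)).card
      = ∑ c : Quot (pr π π), (univ.filter fun x => Quot.mk (pr π π) x = c).card :=
    Finset.card_eq_sum_card_fiberwise fun x _ => mem_univ _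
  have hfib : ∀ c : Quot (pr π π),
      (univ.filter fun x => Quot.mk (pr π π) x = c).card = 2 := by
    intro c
    obtain ⟨x0, rfl⟩ := Quot.exists_rep c
    have hfe : (univ.filter fun x => Quot.mk (pr π π) x = Quot.mk (pr π π) x0)
        = ({x0, π x0} : Finset (Fin N)) := by
      refine le_antisymm ?_ (pair_subset_fiber π π x0)
      intro y hy
      have h1 : Quot.mk (pr π π) y = Quot.mk (pr π π) x0 := (mem_filter.mp hy).2
      have h2 : x0 = y ∨ x0 = π y := (eqvGen_self hπ).mp (Quot.eq.mp h1)
      rcases h2 with rfl | h2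
      · exact Finset.mem_insert_self _ _
      · have : y = π x0 := by rw [h2, hπ.1]
        subst this
        exact Finset.mem_insert_of_mem (Finset.mem_singleton_self _)
    rw [hfe]
    exact Finset.card_pair (Ne.symm (hπ.2 x0))
  have hN : (univ : Finset (Fin N)).card = N := by simp
  have hQ : ∑ c : Quot (pr π π), 2 = 2 * loops π π := by
    rw [Finset.sum_const, Finset.card_univ, smul_eq_mul, mul_comm]
    congr 1
    rw [loops, Nat.card_eq_fintype_card]
  rw [hsum, Finset.sum_congr rfl fun c _ => hfib c] at hN
  rw [← hQ]
  exact hN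

lemma eq_of_two_mul_loops {N : ℕ} {π σ : Equiv.Perm (Fin N)} (hπ : IsPairing π)
    (hσ : IsPairing σ) (h : 2 * loops π σ = N) : π = σ := by
  classical
  have : Fintype (Quot (pr π σ)) := Fintype.ofFinite _
  have hsum : (univ : Finset (Fin N)).card
      = ∑ c : Quot (pr π σ), (univ.filter fun x => Quot.mk (pr π σ) x = c).card :=
    Finset.card_eq_sum_card_fiberwise fun x _ => mem_univ _
  have hlow : ∀ c : Quot (pr π σ), 2 ≤ (univ.filter fun x => Quot.mk (pr π σ) x = c).card := by
    intro c
    obtain ⟨x0, rfl⟩ := Quot.exists_rep c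
    calc 2 = ({x0, π x0} : Finset (Fin N)).card := (Finset.card_pair (Ne.symm (hπ.2 x0))).symm
    _ ≤ _ := Finset.card_le_card (pair_subset_fiber π σ x0)
  have hQ : ∑ c : Quot (pr π σ), 2 = 2 * loops π σ := by
    rw [Finset.sum_const, Finset.card_univ, smul_eq_mul, mul_comm]
    congr 1
    rw [loops, Nat.card_eq_fintype_card]
  have hN : (univ : Finset (Fin N)).card = N := by simp
  have heq : ∑ c : Quot (pr π σ), (2 : ℕ)
      = ∑ c : Quot (pr π σ), (univ.filter fun x => Quot.mk (pr π σ) x = c).card := by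
    omega
  have hall := (Finset.sum_eq_sum_iff_of_le fun c _ => hlow c).mp heq
  apply Equiv.ext
  intro x
  have hfe : (univ.filter fun y => Quot.mk (pr π σ) y = Quot.mk (pr π σ) x)
      = ({x, π x} : Finset (Fin N)) := by
    refine (Finset.eq_of_subset_of_card_le (pair_subset_fiber π σ x) ?_).symm
    rw [Finset.card_pair (Ne.symm (hπ.2 x))]
    exact le_of_eq ((hall _ (mem_univ _)).symm)
  have hrel : pr π σ x (σ x) := Or.inr rfl
  have hσx : σ x ∈ univ.filter fun y => Quot.mk (pr π σ) y = Quot.mk (pr π σ) x :=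
    mem_filter.mpr ⟨mem_univ _, (Quot.sound hrel).symm⟩
  rw [hfe] at hσx
  rcases Finset.mem_insert.mp hσx with h' | h'
  · exact absurd h' (hσ.2 x)
  · rw [Finset.mem_singleton] at h'
    exact h'.symm

lemma loops_triangle {k : ℕ} {π σ τ : Equiv.Perm (Fin (2 * k))} (hτ : IsPairing τ) :
    loops π τ + loops τ σ ≤ k + loops π σ := by
  have h1 : EqvGen.setoid (pr τ τ) ≤ EqvGen.setoid (pr π τ) := by
    refine Setoid.eqvGen_le fun x y h => ?_
    have hτxy : τ x = y := by rcases h with h | h <;> exact h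
    exact EqvGen.rel x y (Or.inr hτxy)
  have h2 : EqvGen.setoid (pr τ τ) ≤ EqvGen.setoid (pr τ σ) := by
    refine Setoid.eqvGen_le fun x y h => ?_
    have hτxy : τ x = y := by rcases h with h | h <;> exact h
    exact EqvGen.rel x y (Or.inl hτxy)
  have h3 : EqvGen.setoid (pr π σ) ≤ EqvGen.setoid (pr π τ) ⊔ EqvGen.setoid (pr τ σ) := by
    refine Setoid.eqvGen_le fun x y h => ?_
    rcases h with h | h
    · exact Setoid.le_def.mp le_sup_left (EqvGen.rel x y (Or.inl h))
    · exact Setoid.le_def.mp le_sup_right (EqvGen.rel x y (Or.inr h))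
  have hsub := blocks_submodular h1 h2
  have h4 := blocks_antitone h3
  have e0 : blocks (EqvGen.setoid (pr τ τ)) = k := by
    have := two_mul_loops_self hτ
    have := loops_eq_blocks τ τ
    omega
  have e1 := loops_eq_blocks π τ
  have e2 := loops_eq_blocks τ σ
  have e3 := loops_eq_blocks π σ
  omega

end BrauerAux
end Part3

/-- `d(π,σ) = k - loops(π,σ)` is a metric on the set of pairings of `{1,…,2k}`:
it is nonnegative, vanishes exactly on the diagonal, is symmetric, and satisfies the
triangle inequality. -/
theorem brauer_space_is_metric (k : ℕ) :
    let D := {f : Equiv.Perm (Fin (2 * k)) // IsPairing f}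
    let d : D → D → ℤ := fun π σ => (k : ℤ) - (loops π.1 σ.1 : ℤ)
    (∀ π σ : D, 0 ≤ d π σ) ∧
    (∀ π σ : D, d π σ = 0 ↔ π = σ) ∧
    (∀ π σ : D, d π σ = d σ π) ∧
    (∀ π σ τ : D, d π σ ≤ d π τ + d τ σ) := by
  intro D d
  refine ⟨?_, ?_, ?_, ?_⟩
  · intro π σ
    have h := BrauerAux.two_mul_loops_le σ.1 π.2
    simp only [d]
    omega
  · intro π σ
    constructor
    · intro h
      have h' : loops π.1 σ.1 = k := by simp only [d] at h; omega
      have h2 : 2 * loops π.1 σ.1 = 2 * k := by omega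
      exact Subtype.ext (BrauerAux.eq_of_two_mul_loops π.2 σ.2 h2)
    · rintro rfl
      have h := BrauerAux.two_mul_loops_self π.2
      simp only [d]
      omega
  · intro π σ
    simp only [d, BrauerAux.loops_comm π.1 σ.1]
  · intro π σ τ
    have key := BrauerAux.loops_triangle (π := π.1) (σ := σ.1) τ.2
    simp only [d]
    omega
end

section
/- With G_{kn}(π,σ) = n^{loops(π,σ)} and K = (2k)!!, for n > K the matrix G_{kn} is invertible and its inverse W_{kn} satisfies max_{π,σ} |δ_{πσ} − n^k W_{kn}(π,σ)| ≤ K/(n−K). -/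
/-- The paper's double factorial: `x!! = (x-1)(x-3)(x-5)⋯`, ending at 1 or 2 (with `0!! = 1`). -/
def dfac (x : ℕ) : ℕ := Nat.doubleFactorial (x - 1)

instance {N : ℕ} : DecidablePred (IsPairing (N := N)) := fun _ => by
  unfold IsPairing; infer_instance

/-- The set of pairings of `{1,…,2k}` (Brauer diagrams). -/
abbrev Pairings (k : ℕ) := {f : Equiv.Perm (Fin (2 * k)) // IsPairing f}

/-- The Gram matrix `G_{kn}(π,σ) = n^{loops(π,σ)}` on pairings of `{1,…,2k}`. -/
noncomputable def Gram (k n : ℕ) : Matrix (Pairings k) (Pairings k) ℝ :=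
  fun π σ => (n : ℝ) ^ loops π.1 σ.1

/-- The matrix `H` defined by `G_{kn} = n^k (I + H)`. -/
noncomputable def Hmat (k n : ℕ) : Matrix (Pairings k) (Pairings k) ℝ :=
  fun π σ => ((n : ℝ) ^ k)⁻¹ * Gram k n π σ - (if π = σ then 1 else 0)

/-- The `ℓ² → ℓ²` operator norm of a matrix. -/
noncomputable def opNorm {m : Type*} [Fintype m] [DecidableEq m] (X : Matrix m m ℝ) : ℝ :=
  ‖Matrix.toEuclideanCLM (𝕜 := ℝ) X‖

/-! ### Loop-counting lemmas -/

section Loops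
variable {N : ℕ}

open Finset in
lemma two_mul_loops_lt {π σ : Equiv.Perm (Fin N)} (hπ : IsPairing π) (hσ : IsPairing σ)
    (hne : π ≠ σ) : 2 * loops π σ < N := by
  classical
  unfold loops
  set r := fun x y : Fin N => π x = y ∨ σ x = y with hr
  letI : Fintype (Quot r) := Fintype.ofFinite _
  rw [Nat.card_eq_fintype_card]
  have hsum : N = ∑ q : Quot r, (univ.filter fun x => Quot.mk r x = q).card := by
    have := Finset.card_eq_sum_card_fiberwise
      (s := (univ : Finset (Fin N))) (t := univ) (f := fun x : Fin N => Quot.mk r x)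
      (fun x _ => Finset.mem_univ _)
    simpa using this
  have h2 : ∀ q : Quot r, 2 ≤ (univ.filter fun x => Quot.mk r x = q).card := by
    intro q
    obtain ⟨x, rfl⟩ := Quot.exists_rep q
    have hsub : ({x, π x} : Finset (Fin N)) ⊆ univ.filter fun y => Quot.mk r y = Quot.mk r x := by
      intro y hy
      rcases Finset.mem_insert.1 hy with rfl | hy
      · simp
      · simp only [Finset.mem_singleton] at hy
        subst hy
        simp only [Finset.mem_filter, Finset.mem_univ, true_and]
        exact (Quot.sound (r := r) (Or.inl rfl)).symm
    calc 2 = ({x, π x} : Finset (Fin N)).card := (Finset.card_pair (hπ.2 x).symm).symm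
    _ ≤ _ := Finset.card_le_card hsub
  obtain ⟨x₀, hx₀⟩ : ∃ x, π x ≠ σ x := by
    by_contra h
    push_neg at h
    exact hne (Equiv.ext h)
  set q₀ : Quot r := Quot.mk r x₀ with hq₀
  have h3 : 3 ≤ (univ.filter fun x => Quot.mk r x = q₀).card := by
    have hsub : ({x₀, π x₀, σ x₀} : Finset (Fin N)) ⊆ univ.filter fun y => Quot.mk r y = q₀ := by
      intro y hy
      simp only [Finset.mem_insert, Finset.mem_singleton] at hy
      rcases hy with rfl | rfl | rfl
      · simp [hq₀]
      · simp only [Finset.mem_filter, Finset.mem_univ, true_and, hq₀]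
        exact (Quot.sound (r := r) (Or.inl rfl)).symm
      · simp only [Finset.mem_filter, Finset.mem_univ, true_and, hq₀]
        exact (Quot.sound (r := r) (Or.inr rfl)).symm
    have hcard : ({x₀, π x₀, σ x₀} : Finset (Fin N)).card = 3 := by
      rw [Finset.card_insert_of_notMem (by simp [(hπ.2 x₀).symm, (hσ.2 x₀).symm, Ne.symm]),
        Finset.card_pair hx₀]
    exact hcard ▸ Finset.card_le_card hsub
  have hone : 1 ≤ Fintype.card (Quot r) := Fintype.card_pos_iff.2 ⟨q₀⟩
  have hsplit : ∑ q : Quot r, (univ.filter fun x => Quot.mk r x = q).card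
      = (univ.filter fun x => Quot.mk r x = q₀).card
        + ∑ q ∈ univ.erase q₀, (univ.filter fun x => Quot.mk r x = q).card := by
    rw [← Finset.sum_erase_add _ _ (Finset.mem_univ q₀), add_comm]
  have hrest : 2 * (Fintype.card (Quot r) - 1)
      ≤ ∑ q ∈ univ.erase q₀, (univ.filter fun x => Quot.mk r x = q).card := by
    calc 2 * (Fintype.card (Quot r) - 1) = ∑ _q ∈ univ.erase q₀, 2 := by
          rw [Finset.sum_const, Finset.card_erase_of_mem (Finset.mem_univ _),
            Finset.card_univ, smul_eq_mul, mul_comm]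
    _ ≤ _ := Finset.sum_le_sum (fun q _ => h2 q)
  omega

open Finset in
lemma two_mul_loops_self {π : Equiv.Perm (Fin N)} (hπ : IsPairing π) :
    2 * loops π π = N := by
  classical
  unfold loops
  set r := fun x y : Fin N => π x = y ∨ π x = y with hr
  letI : Fintype (Quot r) := Fintype.ofFinite _
  rw [Nat.card_eq_fintype_card]
  have hsum : N = ∑ q : Quot r, (univ.filter fun x => Quot.mk r x = q).card := by
    have := Finset.card_eq_sum_card_fiberwise
      (s := (univ : Finset (Fin N))) (t := univ) (f := fun x : Fin N => Quot.mk r x)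
      (fun x _ => Finset.mem_univ _)
    simpa using this
  have hgen : ∀ {a b : Fin N}, Relation.EqvGen r a b → b = a ∨ b = π a := by
    intro a b h
    induction h with
    | rel x y hxy => rcases hxy with h | h <;> exact Or.inr h.symm
    | refl x => exact Or.inl rfl
    | symm x y _ ih =>
        rcases ih with rfl | rfl
        · exact Or.inl rfl
        · exact Or.inr (hπ.1 x).symm
    | trans x y z _ _ ih₁ ih₂ =>
        rcases ih₂ with rfl | rfl
        · exact ih₁
        · rcases ih₁ with rfl | rfl
          · exact Or.inr rfl
          · exact Or.inl (hπ.1 x)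
  have h2 : ∀ q : Quot r, (univ.filter fun x => Quot.mk r x = q).card = 2 := by
    intro q
    obtain ⟨x, rfl⟩ := Quot.exists_rep q
    have heq : (univ.filter fun y => Quot.mk r y = Quot.mk r x) = ({x, π x} : Finset (Fin N)) := by
      ext y
      simp only [Finset.mem_filter, Finset.mem_univ, true_and, Finset.mem_insert,
        Finset.mem_singleton]
      constructor
      · intro h
        exact hgen (Quot.eq.1 h.symm)
      · rintro (rfl | rfl)
        · rfl
        · exact (Quot.sound (r := r) (Or.inl rfl)).symm
    rw [heq, Finset.card_pair (hπ.2 x).symm]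
  calc 2 * Fintype.card (Quot r) = ∑ _q : Quot r, 2 := by
        rw [Finset.sum_const, Finset.card_univ, smul_eq_mul, mul_comm]
  _ = ∑ q : Quot r, (univ.filter fun x => Quot.mk r x = q).card :=
        (Finset.sum_congr rfl (fun q _ => (h2 q).symm))
  _ = N := hsum.symm

end Loops

/-! ### Counting pairings -/

lemma dfac_succ (k : ℕ) : dfac (2 * (k + 1)) = (2 * k + 1) * dfac (2 * k) := by
  cases k with
  | zero => decide
  | succ j =>
      show Nat.doubleFactorial (2 * (j + 2) - 1) = (2 * (j + 1) + 1) * dfac (2 * (j + 1))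
      have h1 : 2 * (j + 2) - 1 = (2 * (j + 1) - 1) + 2 := by omega
      have h2 : (2 * (j + 1) - 1) + 2 = 2 * (j + 1) + 1 := by omega
      rw [h1, Nat.doubleFactorial_add_two, h2]
      rfl

section Inj
variable (k : ℕ)

open Finset

private def Tc (f : Pairings (k + 1)) : Finset (Fin (2 * k + 2)) :=
  (univ.erase (Fin.last (2 * k + 1))).erase (f.1 (Fin.last (2 * k + 1)))

private lemma mem_Tc_iff (f : Pairings (k + 1)) (x : Fin (2 * k + 2)) :
    x ∈ Tc k f ↔ x ≠ f.1 (Fin.last (2 * k + 1)) ∧ x ≠ Fin.last (2 * k + 1) := by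
  unfold Tc
  simp only [Finset.mem_erase, Finset.mem_univ, and_true]

private lemma card_Tc (f : Pairings (k + 1)) : (Tc k f).card = 2 * k := by
  unfold Tc
  rw [Finset.card_erase_of_mem (Finset.mem_erase.2 ⟨f.2.2 _, Finset.mem_univ _⟩),
    Finset.card_erase_of_mem (Finset.mem_univ _), Finset.card_univ, Fintype.card_fin]
  omega

private lemma maps_Tc (f : Pairings (k + 1)) {x : Fin (2 * k + 2)} (hx : x ∈ Tc k f) :
    f.1 x ∈ Tc k f := by
  rw [mem_Tc_iff] at hx ⊢
  obtain ⟨hx1, hx2⟩ := hx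
  refine ⟨fun h => hx2 (f.1.injective h), fun h => hx1 ?_⟩
  have := congrArg f.1 h
  rwa [f.2.1 x] at this

private noncomputable def cIso (f : Pairings (k + 1)) :
    Fin (2 * k) ≃o {x : Fin (2 * k + 2) // x ∈ Tc k f} :=
  (Tc k f).orderIsoOfFin (card_Tc k f)

private noncomputable def rfun (f : Pairings (k + 1)) (x : Fin (2 * k)) : Fin (2 * k) :=
  (cIso k f).symm ⟨f.1 ((cIso k f) x).1, maps_Tc k f ((cIso k f) x).2⟩

private lemma rfun_invol (f : Pairings (k + 1)) (x : Fin (2 * k)) :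
    rfun k f (rfun k f x) = x := by
  unfold rfun
  simp only [OrderIso.apply_symm_apply, f.2.1, Subtype.coe_eta, OrderIso.symm_apply_apply]

private lemma rfun_ne (f : Pairings (k + 1)) (x : Fin (2 * k)) : rfun k f x ≠ x := by
  unfold rfun
  intro h
  apply f.2.2 ((cIso k f) x).1
  have := congrArg (fun y => ((cIso k f) y).1) h
  simpa only [OrderIso.apply_symm_apply] using this

private noncomputable def restr (f : Pairings (k + 1)) : Pairings k :=
  ⟨⟨rfun k f, rfun k f, rfun_invol k f, rfun_invol k f⟩,
    fun x => rfun_invol k f x, fun x => rfun_ne k f x⟩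

private noncomputable def Phi (f : Pairings (k + 1)) : Fin (2 * k + 1) × Pairings k :=
  ((f.1 (Fin.last (2 * k + 1))).castPred (f.2.2 _), restr k f)

private lemma Phi_injective : Function.Injective (Phi k) := by
  intro f g h
  have ha : f.1 (Fin.last (2 * k + 1)) = g.1 (Fin.last (2 * k + 1)) := by
    have := congrArg Prod.fst h
    simpa [Phi, Fin.castPred_inj] using this
  have hS : Tc k f = Tc k g := by unfold Tc; rw [ha]
  have key : ∀ (s t : Finset (Fin (2 * k + 2))) (hs : s.card = 2 * k) (ht : t.card = 2 * k),
      s = t → ∀ x, ((s.orderIsoOfFin hs) x).1 = ((t.orderIsoOfFin ht) x).1 := by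
    rintro s t hs ht rfl x; rfl
  have hIso : ∀ x, ((cIso k f) x).1 = ((cIso k g) x).1 :=
    key _ _ _ _ hS
  have hr : ∀ y, rfun k f y = rfun k g y := by
    intro y
    have := congrArg Prod.snd h
    have h2 : restr k f = restr k g := this
    have := congrArg (fun p => p.1.toFun y) h2
    exact this
  apply Subtype.ext
  apply Equiv.ext
  intro x
  by_cases hx : x = Fin.last (2 * k + 1)
  · rw [hx, ha]
  · by_cases hx2 : x = f.1 (Fin.last (2 * k + 1))
    · rw [hx2, f.2.1, ha, g.2.1]
    · have hmem : x ∈ Tc k f := (mem_Tc_iff k f x).2 ⟨hx2, hx⟩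
      set y := (cIso k f).symm ⟨x, hmem⟩ with hy
      have hxy : ((cIso k f) y).1 = x := by rw [hy, OrderIso.apply_symm_apply]
      have h1 : ((cIso k f) (rfun k f y)).1 = f.1 x := by
        show ((cIso k f) ((cIso k f).symm
          ⟨f.1 ((cIso k f) y).1, maps_Tc k f ((cIso k f) y).2⟩)).1 = f.1 x
        rw [OrderIso.apply_symm_apply]
        exact congrArg f.1 hxy
      have h2 : ((cIso k g) (rfun k g y)).1 = g.1 x := by
        have hxy' : ((cIso k g) y).1 = x := by rw [← hIso, hxy]
        show ((cIso k g) ((cIso k g).symm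
          ⟨g.1 ((cIso k g) y).1, maps_Tc k g ((cIso k g) y).2⟩)).1 = g.1 x
        rw [OrderIso.apply_symm_apply]
        exact congrArg g.1 hxy'
      calc f.1 x = ((cIso k f) (rfun k f y)).1 := h1.symm
      _ = ((cIso k f) (rfun k g y)).1 := by rw [hr y]
      _ = ((cIso k g) (rfun k g y)).1 := hIso _
      _ = g.1 x := h2

end Inj

lemma card_pairings_le (k : ℕ) : Fintype.card (Pairings k) ≤ dfac (2 * k) := by
  induction k with
  | zero =>
      have : Fintype.card (Pairings 0) ≤ Fintype.card (Equiv.Perm (Fin 0)) :=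
        Fintype.card_subtype_le _
      simpa [dfac] using this
  | succ k ih =>
      have h := Fintype.card_le_of_injective _ (Phi_injective k)
      rw [Fintype.card_prod, Fintype.card_fin] at h
      calc Fintype.card (Pairings (k + 1)) ≤ (2 * k + 1) * Fintype.card (Pairings k) := h
      _ ≤ (2 * k + 1) * dfac (2 * k) := Nat.mul_le_mul_left _ ih
      _ = dfac (2 * (k + 1)) := (dfac_succ k).symm

/-! ### Norm lemmas -/

open scoped Matrix.Norms.L2Operator

section NormLemmas
variable {m : Type*} [Fintype m] [DecidableEq m]

omit [DecidableEq m] in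
lemma coord_le_norm (v : EuclideanSpace ℝ m) (i : m) : |v i| ≤ ‖v‖ := by
  rw [EuclideanSpace.norm_eq]
  have h1 : ‖v i‖ ^ 2 ≤ ∑ j, ‖v j‖ ^ 2 :=
    Finset.single_le_sum (fun j _ => sq_nonneg ‖v j‖) (Finset.mem_univ i)
  calc |v i| = Real.sqrt (‖v i‖ ^ 2) := by
        rw [Real.sqrt_sq_eq_abs, abs_norm, Real.norm_eq_abs]
  _ ≤ _ := Real.sqrt_le_sqrt h1

lemma entry_abs_le_norm (A : Matrix m m ℝ) (i j : m) : |A i j| ≤ ‖A‖ := by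
  classical
  have h := Matrix.l2_opNorm_mulVec A (EuclideanSpace.single j (1 : ℝ))
  rw [EuclideanSpace.norm_single, norm_one, mul_one] at h
  set v : EuclideanSpace ℝ m :=
    (EuclideanSpace.equiv m ℝ).symm (A.mulVec (EuclideanSpace.single j 1)) with hvdef
  have hv : v i = A i j := by
    show (A.mulVec (EuclideanSpace.single j (1:ℝ) : m → ℝ)) i = A i j
    have h0 : (EuclideanSpace.single j (1:ℝ) : m → ℝ) = Pi.single j 1 := rfl
    simp [h0, Matrix.mulVec_single]
  calc |A i j| = |v i| := by rw [hv]
  _ ≤ ‖v‖ := coord_le_norm v i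
  _ ≤ ‖A‖ := h

lemma norm_le_sqrt_sum_sq (A : Matrix m m ℝ) :
    ‖A‖ ≤ Real.sqrt (∑ i, ∑ j, (A i j) ^ 2) := by
  rw [Matrix.l2_opNorm_def]
  refine ContinuousLinearMap.opNorm_le_bound _ (Real.sqrt_nonneg _) fun x => ?_
  show ‖(WithLp.equiv 2 (m → ℝ)).symm (A.mulVec ((WithLp.equiv 2 (m → ℝ)) x))‖
      ≤ Real.sqrt (∑ i, ∑ j, (A i j) ^ 2) * ‖x‖
  have key : ∑ i, ‖(A.mulVec ((WithLp.equiv 2 (m → ℝ)) x)) i‖ ^ 2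
      ≤ (∑ i, ∑ j, (A i j) ^ 2) * (∑ j, ‖x j‖ ^ 2) := by
    rw [Finset.sum_mul]
    refine Finset.sum_le_sum fun i _ => ?_
    have hcs := Finset.sum_mul_sq_le_sq_mul_sq Finset.univ (fun j => A i j) (fun j => x j)
    calc ‖(A.mulVec ((WithLp.equiv 2 (m → ℝ)) x)) i‖ ^ 2
        = (∑ j, A i j * x j) ^ 2 := by rw [Real.norm_eq_abs, sq_abs]; rfl
    _ ≤ (∑ j, A i j ^ 2) * (∑ j, x j ^ 2) := hcs
    _ = (∑ j, A i j ^ 2) * (∑ j, ‖x j‖ ^ 2) := by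
        simp [Real.norm_eq_abs, sq_abs]
  calc ‖(WithLp.equiv 2 (m → ℝ)).symm (A.mulVec ((WithLp.equiv 2 (m → ℝ)) x))‖
      = Real.sqrt (∑ i, ‖(A.mulVec ((WithLp.equiv 2 (m → ℝ)) x)) i‖ ^ 2) := by
        rw [EuclideanSpace.norm_eq]; rfl
  _ ≤ Real.sqrt ((∑ i, ∑ j, (A i j) ^ 2) * (∑ j, ‖x j‖ ^ 2)) := Real.sqrt_le_sqrt key
  _ = Real.sqrt (∑ i, ∑ j, (A i j) ^ 2) * Real.sqrt (∑ j, ‖x j‖ ^ 2) := by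
        refine Real.sqrt_mul ?_ _
        exact Finset.sum_nonneg fun i _ => Finset.sum_nonneg fun j _ => sq_nonneg _
  _ = Real.sqrt (∑ i, ∑ j, (A i j) ^ 2) * ‖x‖ := by rw [EuclideanSpace.norm_eq]

lemma norm_one_le' : ‖(1 : Matrix m m ℝ)‖ ≤ 1 := by
  rw [Matrix.cstar_norm_def, _root_.map_one]
  exact ContinuousLinearMap.norm_id_le

lemma neumann (A : Matrix m m ℝ) {q : ℝ} (hA : ‖A‖ ≤ q) (hq : q < 1) :
    IsUnit (1 + A) ∧ (1 + A) * (1 + A)⁻¹ = 1 ∧ ‖(1 + A)⁻¹‖ ≤ (1 - q)⁻¹ := by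
  have hA1 : ‖-A‖ < 1 := by rw [norm_neg]; exact lt_of_le_of_lt hA hq
  let u : (Matrix m m ℝ)ˣ := Units.oneSub (-A) hA1
  have huval : (u : Matrix m m ℝ) = 1 + A := by
    show 1 - -A = 1 + A
    rw [sub_neg_eq_add]
  have hunit : IsUnit (1 + A) := ⟨u, huval⟩
  have hdet := (Matrix.isUnit_iff_isUnit_det _).1 hunit
  have hmul := Matrix.mul_nonsing_inv _ hdet
  have hinv : (1 + A)⁻¹ = ↑u⁻¹ := by
    refine Matrix.inv_eq_right_inv ?_
    rw [← huval]
    exact u.mul_inv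
  refine ⟨hunit, hmul, ?_⟩
  rw [hinv]
  have htsum : (↑u⁻¹ : Matrix m m ℝ) = ∑' n : ℕ, (-A) ^ n := rfl
  rw [htsum]
  have hb := tsum_geometric_le_of_norm_lt_one (-A) hA1
  have h1 : ‖(1 : Matrix m m ℝ)‖ ≤ 1 := norm_one_le'
  have h2 : (1 - ‖-A‖)⁻¹ ≤ (1 - q)⁻¹ := by
    apply inv_anti₀ (by linarith)
    rw [norm_neg]; linarith
  linarith

end NormLemmas

/-! ### Main theorem -/

/-- For `n > K = (2k)!!`, the Gram matrix `G_{kn}` is invertible and its inverse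
`W_{kn}` satisfies `|δ_{πσ} - n^k W_{kn}(π,σ)| ≤ K/(n-K)` for all `π,σ`. -/
theorem weingarten_inverse_estimate (k n : ℕ) (hn : dfac (2 * k) < n) :
    IsUnit (Gram k n) ∧
    ∀ π σ : Pairings k,
      |(if π = σ then (1 : ℝ) else 0) - (n : ℝ) ^ k * (Gram k n)⁻¹ π σ|
        ≤ (dfac (2 * k) : ℝ) / ((n : ℝ) - (dfac (2 * k) : ℝ)) := by
  classical
  have hK1 : 1 ≤ dfac (2 * k) := Nat.doubleFactorial_pos _
  have hn1 : 1 ≤ n := le_trans hK1 hn.le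
  have hnR : (0 : ℝ) < n := by exact_mod_cast lt_of_lt_of_le Nat.zero_lt_one hn1
  have hKn : ((dfac (2 * k) : ℝ)) < n := by exact_mod_cast hn
  have hKR : (0 : ℝ) < (dfac (2 * k) : ℝ) := by exact_mod_cast hK1
  have hq1 : ((dfac (2 * k) : ℝ)) / n < 1 := (div_lt_one hnR).2 hKn
  have hnk : ((n : ℝ) ^ k) ≠ 0 := by positivity
  set H := Hmat k n with hH
  -- diagonal entries vanish
  have hdiag : ∀ π : Pairings k, H π π = 0 := by
    intro π
    have h2 : 2 * loops π.1 π.1 = 2 * k := two_mul_loops_self π.2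
    have hl : loops π.1 π.1 = k := by omega
    simp [hH, Hmat, Gram, hl, inv_mul_cancel₀ hnk]
  -- off-diagonal entries are in [0, 1/n]
  have hoff : ∀ π σ : Pairings k, π ≠ σ → 0 ≤ H π σ ∧ H π σ ≤ 1 / n := by
    intro π σ hne
    have hlt : 2 * loops π.1 σ.1 < 2 * k :=
      two_mul_loops_lt π.2 σ.2 (fun h => hne (Subtype.ext h))
    have hL : loops π.1 σ.1 + 1 ≤ k := by omega
    have hval : H π σ = ((n : ℝ) ^ k)⁻¹ * (n : ℝ) ^ (loops π.1 σ.1) := by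
      simp [hH, Hmat, Gram, if_neg hne]
    constructor
    · rw [hval]; positivity
    · rw [hval]
      have h1n : (1 : ℝ) ≤ n := by exact_mod_cast hn1
      have hpow : (n : ℝ) ^ (loops π.1 σ.1) * (n : ℝ) ≤ (n : ℝ) ^ k := by
        calc (n : ℝ) ^ (loops π.1 σ.1) * n = (n : ℝ) ^ (loops π.1 σ.1 + 1) := (pow_succ _ _).symm
        _ ≤ (n : ℝ) ^ k := pow_le_pow_right₀ h1n hL
      rw [inv_mul_eq_div, div_le_div_iff₀ (by positivity) hnR]
      nlinarith [hpow]
  -- operator norm bound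
  have hC : (Fintype.card (Pairings k) : ℝ) ≤ (dfac (2 * k) : ℝ) := by
    exact_mod_cast card_pairings_le k
  have hCnonneg : (0 : ℝ) ≤ (Fintype.card (Pairings k) : ℝ) := Nat.cast_nonneg _
  have hHnorm : ‖H‖ ≤ (dfac (2 * k) : ℝ) / n := by
    refine le_trans (norm_le_sqrt_sum_sq H) ?_
    have hterm : ∀ π σ : Pairings k, (H π σ) ^ 2 ≤ (1 / (n : ℝ)) ^ 2 := by
      intro π σ
      by_cases h : π = σ
      · subst h; rw [hdiag]; simp
      · obtain ⟨h0, h1⟩ := hoff π σ h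
        nlinarith
    calc Real.sqrt (∑ π : Pairings k, ∑ σ : Pairings k, (H π σ) ^ 2)
        ≤ Real.sqrt (∑ _π : Pairings k, ∑ _σ : Pairings k, (1 / (n : ℝ)) ^ 2) := by
          refine Real.sqrt_le_sqrt (Finset.sum_le_sum fun i _ =>
            Finset.sum_le_sum fun j _ => hterm i j)
    _ = Real.sqrt (((Fintype.card (Pairings k) : ℝ) * (1 / n)) ^ 2) := by
          congr 1
          rw [Finset.sum_const, Finset.sum_const, Finset.card_univ, nsmul_eq_mul, nsmul_eq_mul]
          ring
    _ = (Fintype.card (Pairings k) : ℝ) * (1 / n) := by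
          refine Real.sqrt_sq ?_
          positivity
    _ ≤ (dfac (2 * k) : ℝ) * (1 / n) := by
          apply mul_le_mul_of_nonneg_right hC
          positivity
    _ = (dfac (2 * k) : ℝ) / n := by ring
  obtain ⟨hunit, hmulinv, hinvnorm⟩ := neumann H hHnorm hq1
  -- factorization
  have hfact : Gram k n = (n : ℝ) ^ k • (1 + H) := by
    ext π σ
    simp only [Matrix.smul_apply, Matrix.add_apply, Matrix.one_apply, hH, Hmat, smul_eq_mul]
    have hcancel : (if π = σ then (1 : ℝ) else 0)
        + (((n : ℝ) ^ k)⁻¹ * Gram k n π σ - (if π = σ then (1 : ℝ) else 0))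
        = ((n : ℝ) ^ k)⁻¹ * Gram k n π σ := by ring
    rw [hcancel, ← mul_assoc, mul_inv_cancel₀ hnk, one_mul]
  have hdetH : IsUnit (1 + H).det := (Matrix.isUnit_iff_isUnit_det _).1 hunit
  have hGunit : IsUnit (Gram k n) := by
    rw [hfact, Matrix.isUnit_iff_isUnit_det, Matrix.det_smul]
    exact (isUnit_iff_ne_zero.2 (pow_ne_zero _ hnk)).mul hdetH
  have hGinv : (Gram k n)⁻¹ = ((n : ℝ) ^ k)⁻¹ • (1 + H)⁻¹ := by
    apply Matrix.inv_eq_right_inv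
    rw [hfact, Matrix.smul_mul, Matrix.mul_smul, smul_smul, mul_inv_cancel₀ hnk, one_smul,
      hmulinv]
  refine ⟨hGunit, ?_⟩
  intro π σ
  have hentry : (if π = σ then (1 : ℝ) else 0) - (n : ℝ) ^ k * (Gram k n)⁻¹ π σ
      = ((1 : Matrix (Pairings k) (Pairings k) ℝ) - (1 + H)⁻¹) π σ := by
    rw [hGinv]
    simp only [Matrix.sub_apply, Matrix.one_apply, Matrix.smul_apply, smul_eq_mul,
      ← mul_assoc, mul_inv_cancel₀ hnk, one_mul]
  have hHB : (1 : Matrix (Pairings k) (Pairings k) ℝ) - (1 + H)⁻¹ = H * (1 + H)⁻¹ := by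
    have h := hmulinv
    rw [add_mul, one_mul] at h
    exact (eq_sub_of_add_eq' h).symm
  rw [hentry, hHB]
  have h1 := entry_abs_le_norm (H * (1 + H)⁻¹) π σ
  have h2 : ‖H * (1 + H)⁻¹‖ ≤ ((dfac (2 * k) : ℝ) / n) * (1 - (dfac (2 * k) : ℝ) / n)⁻¹ := by
    refine le_trans (norm_mul_le _ _) ?_
    exact mul_le_mul hHnorm hinvnorm (norm_nonneg _) (by positivity)
  have h3 : ((dfac (2 * k) : ℝ) / n) * (1 - (dfac (2 * k) : ℝ) / n)⁻¹
      = (dfac (2 * k) : ℝ) / ((n : ℝ) - (dfac (2 * k) : ℝ)) := by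
    have hnK : (0 : ℝ) < (n : ℝ) - (dfac (2 * k) : ℝ) := by linarith
    have h4 : (1 : ℝ) - (dfac (2 * k) : ℝ) / n = ((n : ℝ) - (dfac (2 * k) : ℝ)) / n := by
      field_simp
    rw [h4, inv_div, div_mul_div_comm, mul_comm ((dfac (2 * k) : ℝ)) (n : ℝ),
      mul_div_mul_left _ _ (ne_of_gt hnR)]
  linarith
end
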